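/- Let A and B be commutative Fréchet algebras. A continuous function F : Δ(A × B) → ℂ belongs to 𝓜(A × B) if and only if the function Φ : Δ(A) → ℂ, Φ(φ) := F(φ∘pr₁), belongs to 𝓜(A) and the function Ψ : Δ(B) → ℂ, Ψ(ψ) := F(ψ∘pr₂), belongs to 𝓜(B). In other words, 𝓜(A ⊕ B) = 𝓜(A) × 𝓜(B). -/

import Mathlib

open WeakDual Filter Topology Bornology

/-- `𝓜(A)`: a function `Φ : Δ(A) → ℂ` is a *multiplier function* of the commutative topological
`ℂ`-algebra `A` if it is continuous and `Φ ⬝ Â ⊆ Â`, i.e. for every `a ∈ A` there is `b ∈ A`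
with `Φ(φ) φ(a) = φ(b)` for all characters `φ`. -/
def IsMultiplierFunction {A : Type*} [NonUnitalCommRing A] [Module ℂ A] [TopologicalSpace A]
    (Φ : characterSpace ℂ A → ℂ) : Prop :=
  Continuous Φ ∧ ∀ a : A, ∃ b : A, ∀ φ : characterSpace ℂ A, Φ φ * φ a = φ b

/-- A (not necessarily unital) commutative topological `ℂ`-algebra is a *Fréchet algebra* if it
is complete and its topology is generated by a countable increasing family of submultiplicative
seminorms (hence it is a complete metrizable locally convex algebra). -/
def IsFrechetAlgebra (A : Type*) [NonUnitalCommRing A] [Module ℂ A]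
    [UniformSpace A] : Prop :=
  ∃ p : ℕ → Seminorm ℂ A, WithSeminorms p ∧ Monotone p ∧
    (∀ (ℓ : ℕ) (x y : A), p ℓ (x * y) ≤ p ℓ x * p ℓ y) ∧ CompleteSpace A

section CharMaps

variable {A B : Type*}
  [NonUnitalCommRing A] [Module ℂ A] [TopologicalSpace A]
  [NonUnitalCommRing B] [Module ℂ B] [TopologicalSpace B]

/-- The character `φ ∘ pr₁` of `A × B` associated to a character `φ` of `A`. -/
noncomputable def charFst (φ : characterSpace ℂ A) : characterSpace ℂ (A × B) :=
  ⟨((CharacterSpace.toCLM φ).comp (ContinuousLinearMap.fst ℂ A B) : A × B →L[ℂ] ℂ), by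
    refine ⟨?_, fun x y => ?_⟩
    · intro h
      apply φ.2.1
      refine DFunLike.ext _ _ fun a => ?_
      have := DFunLike.congr_fun h (a, 0)
      exact this
    · exact φ.2.2 x.1 y.1⟩

/-- The character `ψ ∘ pr₂` of `A × B` associated to a character `ψ` of `B`. -/
noncomputable def charSnd (ψ : characterSpace ℂ B) : characterSpace ℂ (A × B) :=
  ⟨((CharacterSpace.toCLM ψ).comp (ContinuousLinearMap.snd ℂ A B) : A × B →L[ℂ] ℂ), by
    refine ⟨?_, fun x y => ?_⟩
    · intro h
      apply ψ.2.1
      refine DFunLike.ext _ _ fun b => ?_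
      have := DFunLike.congr_fun h (0, b)
      exact this
    · exact ψ.2.2 x.2 y.2⟩

end CharMaps

section Aux

variable {A B : Type*}
  [NonUnitalCommRing A] [Module ℂ A] [TopologicalSpace A]
  [NonUnitalCommRing B] [Module ℂ B] [TopologicalSpace B]

@[simp] lemma charFst_apply (φ : characterSpace ℂ A) (x : A × B) :
    charFst φ x = φ x.1 := rfl

@[simp] lemma charSnd_apply (ψ : characterSpace ℂ B) (x : A × B) :
    charSnd (A := A) ψ x = ψ x.2 := rfl

lemma char_prod_decomp (χ : characterSpace ℂ (A × B)) (a : A) (b : B) :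
    χ (a, b) = χ (a, 0) + χ (0, b) := by
  have : (a, b) = (a, (0 : B)) + ((0 : A), b) := by simp
  rw [this, map_add]

/-- The restriction of a character of `A × B` vanishing on `0 × B` to a character of `A`. -/
noncomputable def restFst (χ : characterSpace ℂ (A × B)) (h : ∀ b : B, χ (0, b) = 0) :
    characterSpace ℂ A :=
  ⟨((CharacterSpace.toCLM χ).comp (ContinuousLinearMap.inl ℂ A B) : A →L[ℂ] ℂ), by
    refine ⟨?_, fun x y => ?_⟩
    · intro h0
      apply χ.2.1
      refine DFunLike.ext _ _ fun x => ?_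
      have h1 : χ (x.1, 0) = 0 := DFunLike.congr_fun h0 x.1
      have := char_prod_decomp χ x.1 x.2
      simp only [h x.2, h1, add_zero] at this
      exact this
    · have := χ.2.2 (x, 0) (y, 0)
      simp only [Prod.mk_mul_mk, mul_zero] at this
      exact this⟩

/-- The restriction of a character of `A × B` vanishing on `A × 0` to a character of `B`. -/
noncomputable def restSnd (χ : characterSpace ℂ (A × B)) (h : ∀ a : A, χ (a, 0) = 0) :
    characterSpace ℂ B :=
  ⟨((CharacterSpace.toCLM χ).comp (ContinuousLinearMap.inr ℂ A B) : B →L[ℂ] ℂ), by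
    refine ⟨?_, fun x y => ?_⟩
    · intro h0
      apply χ.2.1
      refine DFunLike.ext _ _ fun x => ?_
      have h1 : χ (0, x.2) = 0 := DFunLike.congr_fun h0 x.2
      have := char_prod_decomp χ x.1 x.2
      simp only [h x.1, h1, add_zero, zero_add] at this
      exact this
    · have := χ.2.2 (0, x) (0, y)
      simp only [Prod.mk_mul_mk, zero_mul] at this
      exact this⟩

@[simp] lemma restFst_apply (χ : characterSpace ℂ (A × B)) (h : ∀ b : B, χ (0, b) = 0) (a : A) :
    restFst χ h a = χ (a, 0) := rfl

@[simp] lemma restSnd_apply (χ : characterSpace ℂ (A × B)) (h : ∀ a : A, χ (a, 0) = 0) (b : B) :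
    restSnd χ h b = χ (0, b) := rfl

lemma char_dichotomy (χ : characterSpace ℂ (A × B)) :
    (∀ b : B, χ (0, b) = 0) ∨ (∀ a : A, χ (a, 0) = 0) := by
  by_contra hc
  push_neg at hc
  obtain ⟨⟨b, hb⟩, a, ha⟩ := hc
  have := χ.2.2 (a, 0) (0, b)
  simp only [Prod.mk_mul_mk, mul_zero, zero_mul] at this
  rw [show ((0 : A), (0 : B)) = (0 : A × B) from rfl, map_zero] at this
  exact ha (by
    rcases mul_eq_zero.mp this.symm with h | h
    · exact h
    · exact absurd h hb)

lemma charFst_restFst (χ : characterSpace ℂ (A × B)) (h : ∀ b : B, χ (0, b) = 0) :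
    charFst (restFst χ h) = χ := by
  ext x
  rw [charFst_apply, restFst_apply, char_prod_decomp χ x.1 x.2, h x.2, add_zero]

lemma charSnd_restSnd (χ : characterSpace ℂ (A × B)) (h : ∀ a : A, χ (a, 0) = 0) :
    charSnd (restSnd χ h) = χ := by
  ext x
  rw [charSnd_apply, restSnd_apply, char_prod_decomp χ x.1 x.2, h x.1, zero_add]

lemma continuous_charFst : Continuous fun φ : characterSpace ℂ A => (charFst φ : characterSpace ℂ (A × B)) := by
  apply Continuous.subtype_mk
  apply WeakBilin.continuous_of_continuous_eval
  intro x
  exact (WeakBilin.eval_continuous (topDualPairing ℂ A) x.1).comp continuous_subtype_val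

lemma continuous_charSnd : Continuous fun ψ : characterSpace ℂ B => (charSnd ψ : characterSpace ℂ (A × B)) := by
  apply Continuous.subtype_mk
  apply WeakBilin.continuous_of_continuous_eval
  intro x
  exact (WeakBilin.eval_continuous (topDualPairing ℂ B) x.2).comp continuous_subtype_val

end Aux

/-- Let `A` and `B` be commutative Fréchet algebras.  A function
`F : Δ(A × B) → ℂ` belongs to `𝓜(A × B)` if and only if `Φ : φ ↦ F(φ ∘ pr₁)` belongs to `𝓜(A)`
and `Ψ : ψ ↦ F(ψ ∘ pr₂)` belongs to `𝓜(B)`.  In other words,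
`𝓜(A ⊕ B) = 𝓜(A) × 𝓜(B)`. -/
theorem isMultiplierFunction_prod_iff
    {A B : Type*}
    [NonUnitalCommRing A] [Module ℂ A] [SMulCommClass ℂ A A] [IsScalarTower ℂ A A]
    [UniformSpace A] [IsUniformAddGroup A]
    [NonUnitalCommRing B] [Module ℂ B] [SMulCommClass ℂ B B] [IsScalarTower ℂ B B]
    [UniformSpace B] [IsUniformAddGroup B]
    (hA : IsFrechetAlgebra A) (hB : IsFrechetAlgebra B)
    (F : characterSpace ℂ (A × B) → ℂ) :
    IsMultiplierFunction F ↔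
      IsMultiplierFunction (fun φ : characterSpace ℂ A => F (charFst φ)) ∧
      IsMultiplierFunction (fun ψ : characterSpace ℂ B => F (charSnd ψ)) := by
  constructor
  · rintro ⟨hFc, hFm⟩
    refine ⟨⟨hFc.comp continuous_charFst, fun a => ?_⟩, hFc.comp continuous_charSnd, fun b => ?_⟩
    · obtain ⟨c, hc⟩ := hFm (a, 0)
      exact ⟨c.1, fun φ => by simpa using hc (charFst φ)⟩
    · obtain ⟨c, hc⟩ := hFm (0, b)
      exact ⟨c.2, fun ψ => by simpa using hc (charSnd ψ)⟩
  · rintro ⟨⟨hΦc, hΦm⟩, hΨc, hΨm⟩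
    constructor
    · -- continuity of `F`
      set S₁ : Set (characterSpace ℂ (A × B)) := {χ | ∀ b : B, χ (0, b) = 0} with hS₁
      set S₂ : Set (characterSpace ℂ (A × B)) := {χ | ∀ a : A, χ (a, 0) = 0} with hS₂
      have hdisj : ∀ χ : characterSpace ℂ (A × B), χ ∈ S₁ → χ ∈ S₂ → False := by
        intro χ h1 h2
        apply χ.2.1
        refine DFunLike.ext _ _ fun x => ?_
        have := char_prod_decomp χ x.1 x.2
        simp only [h1 x.2, h2 x.1, add_zero] at this
        exact this
      have hS₂c : IsClosed S₂ := by
        have : S₂ = ⋂ a : A, {χ : characterSpace ℂ (A × B) | χ (a, 0) = 0} := by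
          ext χ; simp [hS₂, Set.mem_iInter]
        rw [this]
        exact isClosed_iInter fun a => isClosed_eq
          ((WeakBilin.eval_continuous (topDualPairing ℂ (A × B)) ((a, 0) : A × B)).comp continuous_subtype_val)
          continuous_const
      have hS₁c : IsClosed S₁ := by
        have : S₁ = ⋂ b : B, {χ : characterSpace ℂ (A × B) | χ (0, b) = 0} := by
          ext χ; simp [hS₁, Set.mem_iInter]
        rw [this]
        exact isClosed_iInter fun b => isClosed_eq
          ((WeakBilin.eval_continuous (topDualPairing ℂ (A × B)) ((0, b) : A × B)).comp continuous_subtype_val)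
          continuous_const
      have hS₁eq : S₁ = S₂ᶜ := by
        ext χ
        constructor
        · exact fun h1 h2 => hdisj χ h1 h2
        · intro h2
          rcases char_dichotomy χ with h | h
          · exact h
          · exact absurd h h2
      have hS₂eq : S₂ = S₁ᶜ := by
        rw [hS₁eq, compl_compl]
      have hS₁o : IsOpen S₁ := hS₁eq ▸ hS₂c.isOpen_compl
      have hS₂o : IsOpen S₂ := hS₂eq ▸ hS₁c.isOpen_compl
      have hcov : ∀ χ : characterSpace ℂ (A × B), ∃ i : Bool,
          (if i then S₁ else S₂) ∈ 𝓝 χ := by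
        intro χ
        rcases char_dichotomy χ with h | h
        · exact ⟨true, by simpa using hS₁o.mem_nhds h⟩
        · exact ⟨false, by simpa using hS₂o.mem_nhds h⟩
      refine continuous_of_cover_nhds hcov fun i => ?_
      have hcS₁ : ContinuousOn F S₁ := by
        rw [continuousOn_iff_continuous_restrict]
        have hrest : Continuous fun x : S₁ => restFst x.1 x.2 := by
          apply continuous_induced_rng.mpr
          apply WeakBilin.continuous_of_continuous_eval
          intro a
          exact (WeakBilin.eval_continuous (topDualPairing ℂ (A × B)) ((a, 0) : A × B)).comp
            ((continuous_subtype_val (p := (· ∈ characterSpace ℂ (A × B)))).comp continuous_subtype_val)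
        have : S₁.domRestrict F =
            (fun φ : characterSpace ℂ A => F (charFst φ)) ∘ fun x : S₁ => restFst x.1 x.2 := by
          funext x
          simp only [Set.domRestrict_apply, Function.comp_apply, charFst_restFst]
        rw [this]
        exact hΦc.comp hrest
      have hcS₂ : ContinuousOn F S₂ := by
        rw [continuousOn_iff_continuous_restrict]
        have hrest : Continuous fun x : S₂ => restSnd x.1 x.2 := by
          apply continuous_induced_rng.mpr
          apply WeakBilin.continuous_of_continuous_eval
          intro b
          exact (WeakBilin.eval_continuous (topDualPairing ℂ (A × B)) ((0, b) : A × B)).comp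
            ((continuous_subtype_val (p := (· ∈ characterSpace ℂ (A × B)))).comp continuous_subtype_val)
        have : S₂.domRestrict F =
            (fun ψ : characterSpace ℂ B => F (charSnd ψ)) ∘ fun x : S₂ => restSnd x.1 x.2 := by
          funext x
          simp only [Set.domRestrict_apply, Function.comp_apply, charSnd_restSnd]
        rw [this]
        exact hΨc.comp hrest
      cases i
      · simpa using hcS₂
      · simpa using hcS₁
    · -- multiplier property of `F`
      rintro ⟨a, b⟩
      obtain ⟨a', ha'⟩ := hΦm a
      obtain ⟨b', hb'⟩ := hΨm b
      refine ⟨(a', b'), fun χ => ?_⟩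
      rcases char_dichotomy χ with h | h
      · have key := ha' (restFst χ h)
        simp only [charFst_restFst χ h, restFst_apply] at key
        calc F χ * χ (a, b) = F χ * χ (a, 0) := by
              rw [char_prod_decomp χ a b, h b, add_zero]
          _ = χ (a', 0) := key
          _ = χ (a', b') := by rw [char_prod_decomp χ a' b', h b', add_zero]
      · have key := hb' (restSnd χ h)
        simp only [charSnd_restSnd χ h, restSnd_apply] at key
        calc F χ * χ (a, b) = F χ * χ (0, b) := by
              rw [char_prod_decomp χ a b, h a, zero_add]
          _ = χ (0, b') := key
          _ = χ (a', b') := by rw [char_prod_decomp χ a' b', h a', zero_add]
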